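/- Fix Z > 0 and σ ≥ 0, and on (0,∞) × ℝ let p(x, ξ) = x²ξ² − 2·x·ξ·√(σ² + Z·x) and ξ_sc(x, ξ) = x·ξ/√(σ² + Z·x). Then for every x > 0 and ξ ∈ ℝ: (i) (∂p/∂ξ)(x, ξ)·x = 2·x²·√(σ² + Z·x)·(ξ_sc(x, ξ) − 1); and (ii) (H_p ξ_sc)(x, ξ) = (∂p/∂ξ)(x, ξ)·x·(∂ξ_sc/∂x)(x, ξ) − x·(∂p/∂x)(x, ξ)·(∂ξ_sc/∂ξ)(x, ξ) = (Z·x²/√(σ² + Z·x))·ξ_sc(x, ξ)·(2 − ξ_sc(x, ξ)). In particular, along the rescaled Hamiltonian flow the fiber variable ξ_sc has critical values exactly ξ_sc = 0 and ξ_sc = 2 (the two radial sets), and x is increasing where ξ_sc > 1 and decreasing where ξ_sc < 1. -/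

import Mathlib

/-- Radial principal symbol `p(x,ξ) = x²ξ² − 2xξ√(σ²+Zx)` of the conjugated operator. -/
noncomputable def symb (Z σ x ξ : ℝ) : ℝ :=
  x ^ 2 * ξ ^ 2 - 2 * x * ξ * Real.sqrt (σ ^ 2 + Z * x)

/-- Rescaled (sc,leC) fiber coordinate `ξ_sc(x,ξ) = xξ/√(σ²+Zx)`. -/
noncomputable def xiSc (Z σ x ξ : ℝ) : ℝ :=
  x * ξ / Real.sqrt (σ ^ 2 + Z * x)

/-- Hamiltonian computations for `p` and `ξ_sc`: the x-component of
the flow is `2x²√(σ²+Zx)(ξ_sc − 1)`, and `H_p ξ_sc = (Zx²/√(σ²+Zx))·ξ_sc·(2 − ξ_sc)`;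
in particular the critical values of `ξ_sc` are `0` and `2`, and `x` is increasing
where `ξ_sc > 1` and decreasing where `ξ_sc < 1`. -/
theorem stmt13 (Z σ : ℝ) (hZ : 0 < Z) (hσ : 0 ≤ σ) (x : ℝ) (hx : 0 < x) (ξ : ℝ) :
    (deriv (fun t => symb Z σ x t) ξ * x
        = 2 * x ^ 2 * Real.sqrt (σ ^ 2 + Z * x) * (xiSc Z σ x ξ - 1)) ∧
    (deriv (fun t => symb Z σ x t) ξ * x * deriv (fun s => xiSc Z σ s ξ) x
        - x * deriv (fun s => symb Z σ s ξ) x * deriv (fun t => xiSc Z σ x t) ξ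
      = Z * x ^ 2 / Real.sqrt (σ ^ 2 + Z * x) * xiSc Z σ x ξ * (2 - xiSc Z σ x ξ)) ∧
    ((deriv (fun t => symb Z σ x t) ξ * x * deriv (fun s => xiSc Z σ s ξ) x
        - x * deriv (fun s => symb Z σ s ξ) x * deriv (fun t => xiSc Z σ x t) ξ = 0)
      ↔ xiSc Z σ x ξ = 0 ∨ xiSc Z σ x ξ = 2) ∧
    (0 < deriv (fun t => symb Z σ x t) ξ * x ↔ 1 < xiSc Z σ x ξ) ∧
    (deriv (fun t => symb Z σ x t) ξ * x < 0 ↔ xiSc Z σ x ξ < 1) := by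
  have hq : 0 < σ ^ 2 + Z * x := by positivity
  set s := Real.sqrt (σ ^ 2 + Z * x) with hsdef
  have hs : 0 < s := Real.sqrt_pos.mpr hq
  have hs2 : s ^ 2 = σ ^ 2 + Z * x := Real.sq_sqrt hq.le
  have hsq : HasDerivAt (fun t : ℝ => Real.sqrt (σ ^ 2 + Z * t)) (Z / (2 * s)) x := by
    have h1 : HasDerivAt (fun t : ℝ => σ ^ 2 + Z * t) Z x := by
      simpa using ((hasDerivAt_id x).const_mul Z).const_add (σ ^ 2)
    have h2 := (Real.hasDerivAt_sqrt hq.ne').comp x h1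
    exact h2.congr_deriv (by rw [← hsdef]; ring)
  have d1 : deriv (fun t => symb Z σ x t) ξ = 2 * x ^ 2 * ξ - 2 * x * s := by
    have h1 : HasDerivAt (fun t => symb Z σ x t) (2 * x ^ 2 * ξ - 2 * x * s) ξ := by
      unfold symb
      rw [← hsdef]
      have ha := (hasDerivAt_pow 2 ξ).const_mul (x ^ 2)
      have hb := ((hasDerivAt_id ξ).const_mul (2 * x)).mul_const s
      exact (ha.sub hb).congr_deriv (by simp; ring)
    exact h1.deriv
  have d2 : deriv (fun t => symb Z σ t ξ) x = 2 * x * ξ ^ 2 - 2 * ξ * s - x * ξ * Z / s := by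
    have h3 := (hasDerivAt_pow 2 x).mul_const (ξ ^ 2)
    have h5 := ((hasDerivAt_id x).const_mul 2).mul_const ξ
    have h4 := h5.mul hsq
    have h6 : HasDerivAt (fun t => symb Z σ t ξ)
        (↑2 * x ^ 1 * ξ ^ 2 - (2 * 1 * ξ * Real.sqrt (σ ^ 2 + Z * x)
          + 2 * x * ξ * (Z / (2 * s)))) x := h3.sub h4
    rw [h6.deriv, ← hsdef]
    field_simp
    ring
  have d3 : deriv (fun t => xiSc Z σ x t) ξ = x / s := by
    have h1 : HasDerivAt (fun t => xiSc Z σ x t) (x / s) ξ := by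
      unfold xiSc
      rw [← hsdef]
      have := ((hasDerivAt_id ξ).const_mul x).div_const s
      exact this.congr_deriv (by ring)
    exact h1.deriv
  have d4 : deriv (fun t => xiSc Z σ t ξ) x = (ξ * s - x * ξ * (Z / (2 * s))) / s ^ 2 := by
    have hnum : HasDerivAt (fun t : ℝ => t * ξ) ξ x := by
      simpa using (hasDerivAt_id x).mul_const ξ
    have h1 : HasDerivAt (fun t => xiSc Z σ t ξ)
        ((ξ * Real.sqrt (σ ^ 2 + Z * x) - x * ξ * (Z / (2 * s))) / Real.sqrt (σ ^ 2 + Z * x) ^ 2) x := by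
      unfold xiSc
      exact hnum.div hsq (by rw [← hsdef]; exact hs.ne')
    rw [h1.deriv, ← hsdef]
  have hxisc : xiSc Z σ x ξ = x * ξ / s := rfl
  have key1 : deriv (fun t => symb Z σ x t) ξ * x
      = 2 * x ^ 2 * s * (xiSc Z σ x ξ - 1) := by
    rw [d1, hxisc]; field_simp
  have key2 : deriv (fun t => symb Z σ x t) ξ * x * deriv (fun s => xiSc Z σ s ξ) x
        - x * deriv (fun s => symb Z σ s ξ) x * deriv (fun t => xiSc Z σ x t) ξ
      = Z * x ^ 2 / s * xiSc Z σ x ξ * (2 - xiSc Z σ x ξ) := by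
    rw [d1, d2, d3, d4, hxisc]
    field_simp
    ring
  have hc : (0:ℝ) < 2 * x ^ 2 * s := by positivity
  have hC : (0:ℝ) < Z * x ^ 2 / s := by positivity
  refine ⟨key1, key2, ?_, ?_, ?_⟩
  · rw [key2]
    constructor
    · intro h
      rcases mul_eq_zero.mp h with h' | h'
      · rcases mul_eq_zero.mp h' with h'' | h''
        · exact absurd h'' hC.ne'
        · exact Or.inl h''
      · right; linarith
    · rintro (h | h) <;> rw [h] <;> ring
  · rw [key1]
    constructor
    · intro h
      by_contra hcon
      push_neg at hcon
      nlinarith [mul_nonpos_of_nonneg_of_nonpos hc.le (by linarith : xiSc Z σ x ξ - 1 ≤ 0)]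
    · intro h
      have : 0 < xiSc Z σ x ξ - 1 := by linarith
      exact mul_pos hc this
  · rw [key1]
    constructor
    · intro h
      by_contra hcon
      push_neg at hcon
      nlinarith [mul_nonneg hc.le (by linarith : (0:ℝ) ≤ xiSc Z σ x ξ - 1)]
    · intro h
      have : xiSc Z σ x ξ - 1 < 0 := by linarith
      exact mul_neg_of_pos_of_neg hc this
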